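/- arXiv:2409.01435 — 3 statements merged into one kernel-verified Lean document; each statement's English description precedes it below -/
import Mathlib

section
/- Let S be a nonempty finite index set, let x_i ∈ ℝ^d and K_i ⊆ {1,…,d} for each i ∈ S, and let y ∈ ℝ^d. Then ‖(1/|S|)·∑_{i∈S} x_i|_{K_i} − y‖² ≤ (1/|S|)·∑_{i∈S} ( ‖(x_i − y)|_{K_i}‖² + ‖y|_{K_i^c}‖² ), where K_i^c denotes the complement of K_i in {1,…,d}. -/
noncomputable def mask {d : ℕ} (x : EuclideanSpace ℝ (Fin d)) (K : Finset (Fin d)) :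
    EuclideanSpace ℝ (Fin d) :=
  WithLp.toLp 2 fun j => if j ∈ K then x j else 0

/-- Key inequality in the proof of the paper's Lemma 1: for a nonempty finite index set `S`,
vectors `x i ∈ ℝ^d`, coordinate sets `K i`, and a reference vector `y`,
`‖(1/|S|)·∑_{i∈S} x_i|_{K_i} − y‖² ≤ (1/|S|)·∑_{i∈S} (‖(x_i − y)|_{K_i}‖² + ‖y|_{K_iᶜ}‖²)`. -/
theorem stmt_5 {ι : Type*} (d : ℕ) (S : Finset ι) (hS : S.Nonempty)
    (x : ι → EuclideanSpace ℝ (Fin d)) (K : ι → Finset (Fin d))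
    (y : EuclideanSpace ℝ (Fin d)) :
    ‖(1 / (S.card : ℝ)) • (∑ i ∈ S, mask (x i) (K i)) - y‖ ^ 2 ≤
      (1 / (S.card : ℝ)) * ∑ i ∈ S, (‖mask (x i - y) (K i)‖ ^ 2 + ‖mask y (K i)ᶜ‖ ^ 2) := by
  set n : ℝ := (S.card : ℝ) with hn
  have hn0 : 0 < n := by rw [hn]; exact_mod_cast Finset.card_pos.mpr hS
  set w : ι → EuclideanSpace ℝ (Fin d) := fun i => mask (x i) (K i) - y with hw
  -- rewrite LHS
  have h1 : (1 / n) • (∑ i ∈ S, mask (x i) (K i)) - y = (1 / n) • ∑ i ∈ S, w i := by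
    rw [Finset.sum_sub_distrib, smul_sub, Finset.sum_const, ← Nat.cast_smul_eq_nsmul ℝ, smul_smul]
    rw [one_div_mul_cancel hn0.ne', one_smul]
  have hdecomp : ∀ i, ‖w i‖ ^ 2 = ‖mask (x i - y) (K i)‖ ^ 2 + ‖mask y (K i)ᶜ‖ ^ 2 := by
    intro i
    have heq : w i = mask (x i - y) (K i) - mask y (K i)ᶜ := by
      ext j
      by_cases h : j ∈ K i <;>
        simp [hw, mask, Finset.mem_compl, h, PiLp.sub_apply]
    have horth : (inner ℝ (mask (x i - y) (K i)) (mask y (K i)ᶜ) : ℝ) = 0 := by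
      rw [PiLp.inner_apply]
      apply Finset.sum_eq_zero
      intro j _
      by_cases h : j ∈ K i <;> simp [mask, h]
    rw [heq, ← real_inner_self_eq_norm_sq, inner_sub_sub_self, horth,
      real_inner_self_eq_norm_sq, real_inner_self_eq_norm_sq]
    rw [real_inner_comm, horth]
    ring
  rw [h1, norm_smul]
  rw [mul_pow, ← Finset.sum_congr rfl (fun i _ => hdecomp i)]
  have hcs : ‖∑ i ∈ S, w i‖ ^ 2 ≤ n * ∑ i ∈ S, ‖w i‖ ^ 2 := by
    calc ‖∑ i ∈ S, w i‖ ^ 2 ≤ (∑ i ∈ S, ‖w i‖) ^ 2 := by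
          gcongr; exact norm_sum_le _ _
      _ ≤ S.card * ∑ i ∈ S, ‖w i‖ ^ 2 := sq_sum_le_card_mul_sum_sq
      _ = n * ∑ i ∈ S, ‖w i‖ ^ 2 := by push_cast; ring
  calc ‖(1/n : ℝ)‖ ^ 2 * ‖∑ i ∈ S, w i‖ ^ 2 ≤ (1/n)^2 * (n * ∑ i ∈ S, ‖w i‖ ^ 2) := by
        rw [Real.norm_eq_abs, sq_abs]; gcongr
    _ = (1/n) * ∑ i ∈ S, ‖w i‖ ^ 2 := by
        field_simp
end

section
/- Let E be a real Hilbert space and f : E → ℝ a differentiable function whose gradient ∇f is Lipschitz with constant μ > 0. Let 0 < η ≤ 1/(4μ), let θ, u ∈ E, and set θ' := θ − η·u. Then f(θ') ≤ f(θ) − (η/4)·‖∇f(θ)‖² + (3η/4)·‖u − ∇f(θ)‖². -/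
open intervalIntegral
open scoped RealInnerProductSpace

private lemma descent_aux {E : Type*} [NormedAddCommGroup E] [InnerProductSpace ℝ E]
    [CompleteSpace E] (f : E → ℝ) (hf : Differentiable ℝ f)
    (μ : ℝ) (hμ : 0 < μ)
    (hlip : ∀ x y, ‖gradient f x - gradient f y‖ ≤ μ * ‖x - y‖)
    (θ v : E) :
    f (θ + v) ≤ f θ + (inner ℝ (gradient f θ) (v) : ℝ) + μ / 2 * ‖v‖ ^ 2 := by
  set g := gradient f with hg
  have hcontg : Continuous g := by
    have : LipschitzWith (Real.toNNReal μ) g := by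
      apply LipschitzWith.of_dist_le_mul
      intro x y
      rw [dist_eq_norm, dist_eq_norm]
      simpa [Real.coe_toNNReal _ hμ.le] using hlip x y
    exact this.continuous
  have hline : ∀ t : ℝ, HasDerivAt (fun t : ℝ => θ + t • v) v t := by
    intro t
    simpa using ((hasDerivAt_id t).smul_const v).const_add θ
  have hφ : ∀ t : ℝ, HasDerivAt (fun t => f (θ + t • v)) (inner ℝ (g (θ + t • v)) (v) : ℝ) t := by
    intro t
    have h1 : HasFDerivAt f (InnerProductSpace.toDual ℝ E (g (θ + t • v))) (θ + t • v) :=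
      (hf _).hasGradientAt.hasFDerivAt
    simpa [Function.comp_def] using h1.comp_hasDerivAt t (hline t)
  have hcontφ' : Continuous fun t : ℝ => (inner ℝ (g (θ + t • v)) (v) : ℝ) := by
    exact (continuous_inner.comp ((hcontg.comp (by continuity)).prodMk continuous_const))
  have hint : ∀ a b : ℝ, IntervalIntegrable (fun t : ℝ => (inner ℝ (g (θ + t • v)) (v) : ℝ)) MeasureTheory.volume a b :=
    fun a b => hcontφ'.intervalIntegrable a b
  have heq : f (θ + v) - f θ = ∫ t in (0:ℝ)..1, (inner ℝ (g (θ + t • v)) (v) : ℝ) := by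
    have := intervalIntegral.integral_eq_sub_of_hasDerivAt
      (f := fun t => f (θ + t • v)) (f' := fun t => (inner ℝ (g (θ + t • v)) (v) : ℝ))
      (fun t _ => hφ t) (hint 0 1)
    simp at this
    linarith [this]
  have hbound : ∀ t ∈ Set.Icc (0:ℝ) 1,
      (inner ℝ (g (θ + t • v)) (v) : ℝ) ≤ (inner ℝ (g θ) (v) : ℝ) + μ * t * ‖v‖ ^ 2 := by
    intro t ht
    have h1 : (inner ℝ (g (θ + t • v)) (v) : ℝ) - (inner ℝ (g θ) (v) : ℝ) = (inner ℝ (g (θ + t • v) - g θ) (v) : ℝ) := by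
      rw [inner_sub_left]
    have h2 : (inner ℝ (g (θ + t • v) - g θ) (v) : ℝ) ≤ ‖g (θ + t • v) - g θ‖ * ‖v‖ :=
      real_inner_le_norm _ _
    have h3 : ‖g (θ + t • v) - g θ‖ ≤ μ * (t * ‖v‖) := by
      have := hlip (θ + t • v) θ
      simpa [norm_smul, abs_of_nonneg ht.1] using this
    nlinarith [norm_nonneg v, norm_nonneg (g (θ + t • v) - g θ)]
  have hintle : (∫ t in (0:ℝ)..1, (inner ℝ (g (θ + t • v)) (v) : ℝ))
      ≤ ∫ t in (0:ℝ)..1, ((inner ℝ (g θ) (v) : ℝ) + μ * t * ‖v‖ ^ 2) := by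
    apply intervalIntegral.integral_mono_on (by norm_num) (hint 0 1)
    · exact (Continuous.intervalIntegrable (by continuity) 0 1)
    · exact hbound
  have hval : (∫ t in (0:ℝ)..1, ((inner ℝ (g θ) (v) : ℝ) + μ * t * ‖v‖ ^ 2))
      = (inner ℝ (g θ) (v) : ℝ) + μ / 2 * ‖v‖ ^ 2 := by
    rw [intervalIntegral.integral_add ((continuous_const).intervalIntegrable 0 1)
      ((by continuity : Continuous fun t : ℝ => μ * t * ‖v‖ ^ 2).intervalIntegrable 0 1)]
    have : (∫ t in (0:ℝ)..1, μ * t * ‖v‖ ^ 2)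
        = (μ * ‖v‖ ^ 2) * ∫ t in (0:ℝ)..1, t := by
      rw [← intervalIntegral.integral_const_mul]
      congr 1; ext t; ring
    rw [this, integral_id]
    simp
    ring
  linarith [heq, hintle, hval.le.trans_eq rfl]

/-- One-step inexact-gradient descent inequality (deterministic core of the per-round
descent estimate in the proof of the paper's Theorem 1): if `f` is differentiable on a
real Hilbert space with `μ`-Lipschitz gradient (`μ > 0`), `0 < η ≤ 1/(4μ)`, and
`θ' = θ − η·u`, then `f(θ') ≤ f(θ) − (η/4)·‖∇f(θ)‖² + (3η/4)·‖u − ∇f(θ)‖²`. -/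
theorem stmt_15 {E : Type*} [NormedAddCommGroup E] [InnerProductSpace ℝ E]
    [CompleteSpace E] (f : E → ℝ) (hf : Differentiable ℝ f)
    (μ : ℝ) (hμ : 0 < μ)
    (hlip : ∀ x y, ‖gradient f x - gradient f y‖ ≤ μ * ‖x - y‖)
    (η : ℝ) (hη0 : 0 < η) (hη : η ≤ 1 / (4 * μ))
    (θ u θ' : E) (hθ' : θ' = θ - η • u) :
    f θ' ≤ f θ - (η / 4) * ‖gradient f θ‖ ^ 2 + (3 * η / 4) * ‖u - gradient f θ‖ ^ 2 := by
  have key := descent_aux f hf μ hμ hlip θ (-(η • u))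
  have hθ'' : θ' = θ + -(η • u) := by rw [hθ']; abel
  rw [← hθ''] at key
  set g := gradient f θ with hgdef
  set e := u - g with hedef
  have hu : u = g + e := by rw [hedef]; abel
  have hinner : (inner ℝ (g) (-(η • u)) : ℝ) = -η * (‖g‖ ^ 2 + (inner ℝ (g) (e) : ℝ)) := by
    rw [hu, inner_neg_right, real_inner_smul_right, inner_add_right,
      real_inner_self_eq_norm_sq]
    ring
  have hnorm : ‖-(η • u)‖ ^ 2 = η ^ 2 * ‖u‖ ^ 2 := by
    rw [norm_neg, norm_smul]
    simp [mul_pow, sq_abs]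
  have hu2 : ‖u‖ ^ 2 ≤ 2 * ‖g‖ ^ 2 + 2 * ‖e‖ ^ 2 := by
    have := norm_add_le g e
    rw [← hu] at this
    nlinarith [norm_nonneg u, norm_nonneg g, norm_nonneg e, sq_nonneg (‖g‖ - ‖e‖),
      pow_le_pow_left₀ (norm_nonneg u) this 2]
  have hge : -(inner ℝ (g) (e) : ℝ) ≤ ‖g‖ ^ 2 / 2 + ‖e‖ ^ 2 / 2 := by
    have h1 : (inner ℝ (-g) (e) : ℝ) ≤ ‖g‖ * ‖e‖ := by
      simpa using real_inner_le_norm (-g) e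
    rw [inner_neg_left] at h1
    nlinarith [norm_nonneg g, norm_nonneg e, sq_nonneg (‖g‖ - ‖e‖)]
  have hμη : μ * η ≤ 1 / 4 := by
    rw [le_div_iff₀ (by positivity : (0:ℝ) < 4 * μ)] at hη
    nlinarith
  rw [hinner, hnorm] at key
  nlinarith [norm_nonneg g, norm_nonneg e, sq_nonneg η, hμ.le, hη0.le,
    mul_nonneg (mul_nonneg hμ.le hη0.le) (sq_nonneg ‖e‖),
    mul_nonneg (mul_nonneg hμ.le hη0.le) (sq_nonneg ‖g‖)]
end

section
/- Let E be a real Hilbert space and f : E → ℝ a differentiable function whose gradient ∇f is Lipschitz with constant μ > 0 and which is bounded below: f(x) ≥ f_* for all x ∈ E. Let 0 < η ≤ 1/(4μ), κ ≥ 0, T ≥ 1, and let θ⁰, θ¹, …, θ^T ∈ E and u⁰, …, u^{T−1} ∈ E satisfy θ^{t+1} = θ^t − η·u^t and ‖u^t − ∇f(θ^t)‖² ≤ κ for every 0 ≤ t ≤ T−1. Then (1/T)·∑_{t=0}^{T−1} ‖∇f(θ^t)‖² ≤ 4·(f(θ⁰) − f_*)/(T·η) + 3κ. -/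
open Finset RealInnerProductSpace

private lemma descent {E : Type*} [NormedAddCommGroup E] [InnerProductSpace ℝ E]
    [CompleteSpace E] (f : E → ℝ) (hf : Differentiable ℝ f)
    (μ : ℝ) (hμ : 0 ≤ μ)
    (hlip : ∀ x y, ‖gradient f x - gradient f y‖ ≤ μ * ‖x - y‖) (x v : E) :
    f (x + v) ≤ f x + ⟪gradient f x, v⟫ + μ / 2 * ‖v‖ ^ 2 := by
  set φ : ℝ → ℝ := fun t => f (x + t • v) - t * ⟪gradient f x, v⟫ - μ / 2 * t ^ 2 * ‖v‖ ^ 2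
    with hφ
  have hc : ∀ t : ℝ, HasDerivAt (fun s : ℝ => x + s • v) v t := by
    intro t
    simpa using ((hasDerivAt_id t).smul_const v).const_add x
  have hd : ∀ t : ℝ, HasDerivAt φ
      (⟪gradient f (x + t • v), v⟫ - ⟪gradient f x, v⟫ - μ / 2 * (2 * t) * ‖v‖ ^ 2) t := by
    intro t
    have h1 : HasDerivAt (fun s : ℝ => f (x + s • v)) (⟪gradient f (x + t • v), v⟫) t := by
      have hg := (hf (x + t • v)).hasGradientAt.hasFDerivAt
      have := hg.comp_hasDerivAt t (hc t)
      simpa [Function.comp_def] using this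
    have h2 : HasDerivAt (fun s : ℝ => s * ⟪gradient f x, v⟫) (⟪gradient f x, v⟫) t := by
      simpa using (hasDerivAt_id t).mul_const (⟪gradient f x, v⟫)
    have h3 : HasDerivAt (fun s : ℝ => μ / 2 * s ^ 2 * ‖v‖ ^ 2) (μ / 2 * (2 * t) * ‖v‖ ^ 2) t := by
      have h := ((hasDerivAt_pow 2 t).const_mul (μ / 2)).mul_const (‖v‖ ^ 2)
      exact h.congr_deriv (by norm_num)
    exact (h1.sub h2).sub h3
  have hanti : AntitoneOn φ (Set.Icc (0 : ℝ) 1) := by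
    apply antitoneOn_of_deriv_nonpos (convex_Icc 0 1)
    · exact fun t _ => ((hd t).continuousAt).continuousWithinAt
    · exact fun t _ => ((hd t).differentiableAt).differentiableWithinAt
    · intro t ht
      rw [(hd t).deriv]
      have ht0 : 0 ≤ t := le_of_lt (Set.mem_Ioo.mp (by simpa using ht)).1
      have hb : ⟪gradient f (x + t • v) - gradient f x, v⟫ ≤ μ * t * ‖v‖ ^ 2 := by
        calc ⟪gradient f (x + t • v) - gradient f x, v⟫
            ≤ ‖gradient f (x + t • v) - gradient f x‖ * ‖v‖ := real_inner_le_norm _ _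
          _ ≤ (μ * ‖(x + t • v) - x‖) * ‖v‖ := by
              exact mul_le_mul_of_nonneg_right (hlip _ _) (norm_nonneg _)
          _ = μ * t * ‖v‖ ^ 2 := by
              simp [norm_smul, abs_of_nonneg ht0]; ring
      rw [inner_sub_left] at hb
      nlinarith
  have h01 := hanti (Set.left_mem_Icc.mpr zero_le_one) (Set.right_mem_Icc.mpr zero_le_one)
    zero_le_one
  simp only [hφ, one_smul, zero_smul, add_zero, one_pow, zero_pow, one_mul, zero_mul,
    mul_zero, sub_zero] at h01
  linarith

/-- Deterministic analogue of the paper's Theorem 1 ((f,R)-Byzantine resilience of FL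
with LASA): if `f` is differentiable on a real Hilbert space with `μ`-Lipschitz gradient
(`μ > 0`) and bounded below by `f_*`, `0 < η ≤ 1/(4μ)`, and the iterates satisfy
`θ^{t+1} = θ^t − η·u^t` with `‖u^t − ∇f(θ^t)‖² ≤ κ` for all `t < T`, then
`(1/T)·∑_{t<T} ‖∇f(θ^t)‖² ≤ 4(f(θ⁰) − f_*)/(Tη) + 3κ`. -/
theorem stmt_17 {E : Type*} [NormedAddCommGroup E] [InnerProductSpace ℝ E]
    [CompleteSpace E] (f : E → ℝ) (hf : Differentiable ℝ f)
    (μ : ℝ) (hμ : 0 < μ)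
    (hlip : ∀ x y, ‖gradient f x - gradient f y‖ ≤ μ * ‖x - y‖)
    (fstar : ℝ) (hbdd : ∀ x, fstar ≤ f x)
    (η : ℝ) (hη0 : 0 < η) (hη : η ≤ 1 / (4 * μ))
    (κ : ℝ) (hκ : 0 ≤ κ) (T : ℕ) (hT : 1 ≤ T)
    (θ u : ℕ → E)
    (hstep : ∀ t < T, θ (t + 1) = θ t - η • u t)
    (herr : ∀ t < T, ‖u t - gradient f (θ t)‖ ^ 2 ≤ κ) :
    (1 / (T : ℝ)) * ∑ t ∈ Finset.range T, ‖gradient f (θ t)‖ ^ 2 ≤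
      4 * (f (θ 0) - fstar) / ((T : ℝ) * η) + 3 * κ := by
  have hμη : μ * η ≤ 1 / 4 := by
    rw [le_div_iff₀ (by positivity)] at hη
    nlinarith
  -- per-step inequality
  have step : ∀ t < T, η / 4 * ‖gradient f (θ t)‖ ^ 2 ≤
      f (θ t) - f (θ (t + 1)) + 3 * η / 4 * κ := by
    intro t ht
    set g := gradient f (θ t) with hg
    set e := u t - g with he
    have hu : u t = g + e := by simp [he]
    have hd := descent f hf μ hμ.le hlip (θ t) (-(η • u t))
    have hθ : θ (t + 1) = θ t + -(η • u t) := by rw [hstep t ht]; abel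
    rw [← hθ] at hd
    have hin : ⟪g, -(η • u t)⟫ = -(η * (‖g‖ ^ 2 + ⟪g, e⟫)) := by
      rw [inner_neg_right, inner_smul_right, hu, inner_add_right, real_inner_self_eq_norm_sq]
    have hnorm : ‖-(η • u t)‖ ^ 2 = η ^ 2 * ‖u t‖ ^ 2 := by
      rw [norm_neg, norm_smul]
      simp [abs_of_nonneg hη0.le, mul_pow]
    have hge : ⟪g, e⟫ ≥ -(‖g‖ ^ 2 / 2 + ‖e‖ ^ 2 / 2) := by
      have h1 : -(‖g‖ * ‖e‖) ≤ ⟪g, e⟫ := neg_le_of_neg_le (by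
        simpa [inner_neg_left] using real_inner_le_norm (-g) e)
      nlinarith [sq_nonneg (‖g‖ - ‖e‖)]
    have hu2 : ‖u t‖ ^ 2 ≤ 2 * ‖g‖ ^ 2 + 2 * ‖e‖ ^ 2 := by
      have h1 : ‖u t‖ ≤ ‖g‖ + ‖e‖ := by
        have := norm_add_le g e
        rwa [← hu] at this
      have h2 : ‖u t‖ ^ 2 ≤ (‖g‖ + ‖e‖) ^ 2 := pow_le_pow_left₀ (norm_nonneg _) h1 2
      nlinarith [sq_nonneg (‖g‖ - ‖e‖)]
    have hek : ‖e‖ ^ 2 ≤ κ := herr t ht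
    rw [hin, hnorm] at hd
    have e1 : η * (-(⟪g, e⟫ : ℝ)) ≤ η * (‖g‖ ^ 2 / 2 + ‖e‖ ^ 2 / 2) :=
      mul_le_mul_of_nonneg_left (by linarith [hge]) hη0.le
    have e2 := mul_le_mul_of_nonneg_left hu2 (by positivity : (0:ℝ) ≤ μ / 2 * η ^ 2)
    have e3 := mul_le_mul_of_nonneg_right hμη
      (by positivity : (0:ℝ) ≤ η * (‖g‖ ^ 2 + ‖e‖ ^ 2))
    have e4 := mul_le_mul_of_nonneg_left hek (by positivity : (0:ℝ) ≤ 3 * η / 4)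
    nlinarith [e1, e2, e3, e4, hd]
  -- sum up
  have hsum : η / 4 * ∑ t ∈ range T, ‖gradient f (θ t)‖ ^ 2 ≤
      f (θ 0) - f (θ T) + T * (3 * η / 4 * κ) := by
    rw [mul_sum]
    calc ∑ t ∈ range T, η / 4 * ‖gradient f (θ t)‖ ^ 2
        ≤ ∑ t ∈ range T, (f (θ t) - f (θ (t + 1)) + 3 * η / 4 * κ) := by
          refine Finset.sum_le_sum fun t ht => step t (mem_range.mp ht)
      _ = (f (θ 0) - f (θ T)) + T * (3 * η / 4 * κ) := by
          rw [Finset.sum_add_distrib, Finset.sum_range_sub' (fun t => f (θ t))]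
          simp [mul_comm]
  have hTf : fstar ≤ f (θ T) := hbdd _
  have hT0 : (0:ℝ) < T := by exact_mod_cast hT
  have hS : ∑ t ∈ range T, ‖gradient f (θ t)‖ ^ 2 ≤
      4 * (f (θ 0) - fstar) / η + 3 * T * κ := by
    have h1 : η / 4 * ∑ t ∈ range T, ‖gradient f (θ t)‖ ^ 2 ≤
        (f (θ 0) - fstar) + (T:ℝ) * (3 * η / 4 * κ) := by linarith
    have h2 : ∑ t ∈ range T, ‖gradient f (θ t)‖ ^ 2 ≤
        ((f (θ 0) - fstar) + (T:ℝ) * (3 * η / 4 * κ)) / (η / 4) := by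
      rw [le_div_iff₀ (by positivity)]
      linarith
    calc _ ≤ ((f (θ 0) - fstar) + (T:ℝ) * (3 * η / 4 * κ)) / (η / 4) := h2
      _ = 4 * (f (θ 0) - fstar) / η + 3 * T * κ := by field_simp
  have hkey : (T:ℝ) * (4 * (f (θ 0) - fstar) / ((T : ℝ) * η) + 3 * κ) =
      4 * (f (θ 0) - fstar) / η + 3 * T * κ := by field_simp
  rw [one_div, inv_mul_le_iff₀ hT0, hkey]
  exact hS
end
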